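/- Let 1 → N → H → G → 1 be an extension of groups (i.e., a surjective group homomorphism p : H → G with kernel N) such that N ≤ Z_n(H) for a fixed positive integer n. If G is finite, then γ_{n+1}(H) is finite. -/

import Mathlib

open Subgroup QuotientGroup Pointwise
open scoped commutatorElement

section helpers
variable {G : Type*} [Group G]

lemma comm_central_left (a z b : G) (hz : z ∈ Subgroup.center G) : ⁅a*z, b⁆ = ⁅a, b⁆ := by
  have := (Subgroup.mem_center_iff.mp hz b).symm
  simp only [commutatorElement_def, mul_inv_rev]
  rw [mul_assoc a z b, this]
  group

lemma comm_central_right (a b z : G) (hz : z ∈ Subgroup.center G) : ⁅a, b*z⁆ = ⁅a, b⁆ := by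
  rw [← commutatorElement_inv (b*z) a, comm_central_left b z a hz, commutatorElement_inv]

lemma comm_mul_right (a b c : G) : ⁅a, b*c⁆ = ⁅a, b⁆ * (b * ⁅a, c⁆ * b⁻¹) := by
  simp only [commutatorElement_def]; group

lemma comm_mul_left (a b c : G) : ⁅a*b, c⁆ = (a * ⁅b, c⁆ * a⁻¹) * ⁅a, c⁆ := by
  simp only [commutatorElement_def]; group
end helpers

section three
variable {G : Type*} [Group G]

lemma commutator_le_iff_map_eq_bot (A B N : Subgroup G) [N.Normal] :
    ⁅A, B⁆ ≤ N ↔ ⁅A.map (QuotientGroup.mk' N), B.map (QuotientGroup.mk' N)⁆ = ⊥ := by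
  rw [← Subgroup.map_commutator, Subgroup.map_eq_bot_iff, QuotientGroup.ker_mk']

lemma three_subgroups_le (H₁ H₂ H₃ N : Subgroup G) [N.Normal]
    (h1 : ⁅⁅H₂, H₃⁆, H₁⁆ ≤ N) (h2 : ⁅⁅H₃, H₁⁆, H₂⁆ ≤ N) : ⁅⁅H₁, H₂⁆, H₃⁆ ≤ N := by
  rw [commutator_le_iff_map_eq_bot, Subgroup.map_commutator] at h1 h2 ⊢
  exact Subgroup.commutator_commutator_eq_bot_of_rotate h1 h2

lemma upper_step (j : ℕ) :
    ⁅Subgroup.upperCentralSeries G (j+1), (⊤ : Subgroup G)⁆ ≤ Subgroup.upperCentralSeries G j := by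
  rw [Subgroup.commutator_le]
  intro x hx g _
  exact (Subgroup.upperCentralSeries_isAscendingCentralSeries G).2 x j hx g

lemma lower_upper_comm (i : ℕ) : ∀ j : ℕ,
    ⁅(⊤ : Subgroup G).lowerCentralSeries i, Subgroup.upperCentralSeries G (i+j+1)⁆ ≤ Subgroup.upperCentralSeries G j := by
  induction i with
  | zero =>
    intro j
    rw [Subgroup.lowerCentralSeries_zero, Subgroup.commutator_comm]
    simpa using upper_step (G := G) j
  | succ i ih =>
    intro j
    have hdef : (⊤ : Subgroup G).lowerCentralSeries (i+1) = ⁅(⊤ : Subgroup G).lowerCentralSeries i, (⊤ : Subgroup G)⁆ := by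
      exact Subgroup.lowerCentralSeries_succ _ _
    rw [hdef]
    apply three_subgroups_le
    · calc ⁅⁅(⊤ : Subgroup G), Subgroup.upperCentralSeries G (i+1+j+1)⁆, (⊤ : Subgroup G).lowerCentralSeries i⁆
          ≤ ⁅Subgroup.upperCentralSeries G (i+j+1), (⊤ : Subgroup G).lowerCentralSeries i⁆ := by
            apply Subgroup.commutator_mono _ le_rfl
            rw [Subgroup.commutator_comm]
            have : i + 1 + j + 1 = (i + j + 1) + 1 := by omega
            rw [this]
            exact upper_step _
        _ ≤ Subgroup.upperCentralSeries G j := by rw [Subgroup.commutator_comm]; exact ih j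
    · calc ⁅⁅Subgroup.upperCentralSeries G (i+1+j+1), (⊤ : Subgroup G).lowerCentralSeries i⁆, (⊤ : Subgroup G)⁆
          ≤ ⁅Subgroup.upperCentralSeries G (j+1), (⊤ : Subgroup G)⁆ := by
            apply Subgroup.commutator_mono _ le_rfl
            rw [Subgroup.commutator_comm]
            have : i + 1 + j + 1 = i + (j+1) + 1 := by omega
            rw [this]
            exact ih (j+1)
        _ ≤ Subgroup.upperCentralSeries G j := upper_step j

lemma lower_upper_comm_bot (n : ℕ) :
    ⁅(⊤ : Subgroup G).lowerCentralSeries n, Subgroup.upperCentralSeries G (n+1)⁆ = ⊥ := by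
  have := lower_upper_comm (G := G) n 0
  simpa using this
end three

section schur
variable (G : Type*) [Group G]

lemma finite_commutatorSet_of_finite_quotient_center [Finite (G ⧸ Subgroup.center G)] :
    Finite (commutatorSet G) := by
  have h : commutatorSet G ⊆ Set.range
      (fun p : (G ⧸ Subgroup.center G) × (G ⧸ Subgroup.center G) => ⁅p.1.out, p.2.out⁆) := by
    rintro x ⟨a, b, rfl⟩
    refine ⟨(QuotientGroup.mk a, QuotientGroup.mk b), ?_⟩
    have ha : ((QuotientGroup.mk a : G ⧸ Subgroup.center G).out)⁻¹ * a ∈ Subgroup.center G := by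
      rw [← QuotientGroup.eq, QuotientGroup.out_eq']
    have hb : ((QuotientGroup.mk b : G ⧸ Subgroup.center G).out)⁻¹ * b ∈ Subgroup.center G := by
      rw [← QuotientGroup.eq, QuotientGroup.out_eq']
    set a' := (QuotientGroup.mk a : G ⧸ Subgroup.center G).out
    set b' := (QuotientGroup.mk b : G ⧸ Subgroup.center G).out
    have : ⁅a' * (a'⁻¹ * a), b' * (b'⁻¹ * b)⁆ = ⁅a', b'⁆ := by
      rw [comm_central_left _ _ _ ha, comm_central_right _ _ _ hb]
    simpa using this.symm
  exact (Set.finite_range _).subset h |>.to_subtype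

lemma schur [Finite (G ⧸ Subgroup.center G)] : Finite (commutator G) := by
  have := finite_commutatorSet_of_finite_quotient_center G
  infer_instance
end schur

section keylemma
variable {G : Type*} [Group G]

/-- If `A` is an abelian normal subgroup, `C ≤ A` is central in `G`, `A/C` is "finite"
(witnessed by coset reps and an exponent), `B` centralizes `A` and has finitely many
cosets in `G`, then `⁅A, ⊤⁆` is finite. -/
lemma finite_commutator_top_of_abelian_normal (A B C : Subgroup G) [A.Normal]
    (habel : ∀ x ∈ A, ∀ y ∈ A, x * y = y * x)
    (hC : C ≤ Subgroup.center G)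
    (hAB : ∀ a ∈ A, ∀ b ∈ B, ⁅a, b⁆ = 1)
    (m : ℕ) (hm : 0 < m) (hpow : ∀ a ∈ A, a ^ m ∈ C)
    (sA : Set G) (hsAfin : sA.Finite) (hsA : ∀ a ∈ A, ∃ t ∈ sA, t ∈ A ∧ t⁻¹ * a ∈ C)
    (sB : Set G) (hsBfin : sB.Finite) (hsB : ∀ g : G, ∃ t ∈ sB, t⁻¹ * g ∈ B) :
    Finite (⁅A, (⊤ : Subgroup G)⁆ : Subgroup G) := by
  classical
  -- the finite set of possible commutators
  set S : Set G := (fun p : G × G => ⁅p.1, p.2⁆) '' ((sA ∩ A) ×ˢ sB) with hS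
  have hSfin : S.Finite := ((hsAfin.inter_of_left _).prod hsBfin).image _
  -- every commutator ⁅a, g⁆ with a ∈ A is in S
  have hmem : ∀ a ∈ A, ∀ g : G, ⁅a, g⁆ ∈ S := by
    intro a ha g
    obtain ⟨t, htsA, htA, htc⟩ := hsA a ha
    obtain ⟨u, husB, hub⟩ := hsB g
    refine ⟨(t, u), ⟨⟨htsA, htA⟩, husB⟩, ?_⟩
    have h1 : ⁅t * (t⁻¹ * a), u * (u⁻¹ * g)⁆ = ⁅t, u * (u⁻¹ * g)⁆ :=
      comm_central_left _ _ _ (hC htc)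
    have h2 : ⁅t, u * (u⁻¹ * g)⁆ = ⁅t, u⁆ * (u * ⁅t, u⁻¹ * g⁆ * u⁻¹) := comm_mul_right _ _ _
    have h3 : ⁅t, u⁻¹ * g⁆ = 1 := hAB t htA _ hub
    simp only [h3, mul_one, mul_inv_cancel] at h2
    have := h1.trans h2
    simpa using this.symm
  -- S ⊆ A
  have hSA : S ⊆ (A : Set G) := by
    rintro x ⟨⟨t, u⟩, ⟨⟨-, htA⟩, -⟩, rfl⟩
    show ⁅t, u⁆ ∈ (A : Set G)
    have h : ⁅t, u⁆ = t * (u * t⁻¹ * u⁻¹) := by group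
    rw [h]
    exact A.mul_mem htA (by simpa using (‹A.Normal›.conj_mem t⁻¹ (A.inv_mem htA) u))
  -- for fixed g, a ↦ ⁅a, g⁆ is multiplicative on A
  have hhom : ∀ g : G, ∀ x ∈ A, ∀ y ∈ A, ⁅x * y, g⁆ = ⁅x, g⁆ * ⁅y, g⁆ := by
    intro g x hx y hy
    have h1 : ⁅x * y, g⁆ = (x * ⁅y, g⁆ * x⁻¹) * ⁅x, g⁆ := comm_mul_left _ _ _
    have hyg : ⁅y, g⁆ ∈ A := by
      have : ⁅y, g⁆ = y * (g * y⁻¹ * g⁻¹) := by group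
      rw [this]
      exact A.mul_mem hy (by simpa using (‹A.Normal›.conj_mem y⁻¹ (A.inv_mem hy) g))
    have hxg : ⁅x, g⁆ ∈ A := by
      have : ⁅x, g⁆ = x * (g * x⁻¹ * g⁻¹) := by group
      rw [this]
      exact A.mul_mem hx (by simpa using (‹A.Normal›.conj_mem x⁻¹ (A.inv_mem hx) g))
    rw [h1, habel x hx _ hyg, mul_assoc ⁅y, g⁆ x x⁻¹, mul_inv_cancel, mul_one,
      habel _ hyg _ hxg]
  -- elements of S have order dividing m
  have hpowS : ∀ x ∈ S, x ^ m = 1 := by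
    rintro x ⟨⟨t, u⟩, ⟨⟨-, htA⟩, -⟩, rfl⟩
    show ⁅t, u⁆ ^ m = 1
    have key : ∀ k : ℕ, ⁅t, u⁆ ^ k = ⁅t ^ k, u⁆ := by
      intro k
      induction k with
      | zero => simp
      | succ k ih =>
        rw [pow_succ, pow_succ, ih, hhom u _ (A.pow_mem htA k) _ htA]
    rw [key m]
    have hc : t ^ m ∈ Subgroup.center G := hC (hpow t htA)
    exact commutatorElement_eq_one_iff_mul_comm.mpr (Subgroup.mem_center_iff.mp hc u).symm
  -- the subgroup generated by S
  set M : Subgroup G := Subgroup.closure S with hM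
  have hle : ⁅A, (⊤ : Subgroup G)⁆ ≤ M := by
    rw [Subgroup.commutator_le]
    intro a ha g _
    exact Subgroup.subset_closure (hmem a ha g)
  -- every element of M lies in A and has order dividing m
  have hMA : ∀ x ∈ M, x ∈ A ∧ x ^ m = 1 := by
    intro x hx
    refine Subgroup.closure_induction ?_ ?_ ?_ ?_ hx
    · intro y hy
      exact ⟨hSA hy, hpowS y hy⟩
    · exact ⟨A.one_mem, one_pow m⟩
    · rintro y z - - ⟨hyA, hym⟩ ⟨hzA, hzm⟩
      refine ⟨A.mul_mem hyA hzA, ?_⟩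
      rw [(Commute.mul_pow ?_ m), hym, hzm, one_mul]
      exact habel y hyA z hzA
    · rintro y - ⟨hyA, hym⟩
      exact ⟨A.inv_mem hyA, by rw [inv_pow, hym, inv_one]⟩
  -- M is a finitely generated torsion commutative group, hence finite
  have hScomm : ∀ x ∈ S, ∀ y ∈ S, x * y = y * x := fun x hx y hy =>
    habel x (hSA hx) y (hSA hy)
  letI : CommGroup M := Subgroup.closureCommGroupOfComm hScomm
  obtain ⟨s, hseq⟩ := hSfin.exists_finset_coe
  haveI : Group.FG M := by
    rw [hM, ← hseq]
    infer_instance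
  have htor : Monoid.IsTorsion M := by
    intro x
    have hx : (x : G) ^ m = 1 := (hMA x x.2).2
    refine isOfFinOrder_iff_pow_eq_one.mpr ⟨m, hm, ?_⟩
    ext
    simpa using hx
  haveI : Finite M := CommGroup.finite_of_fg_torsion M htor
  have hfin : (M : Set G).Finite := M.carrier.toFinite
  exact ((hfin.subset hle).to_subtype)
end keylemma

section infra
variable {G G' : Type*} [Group G] [Group G']

lemma lcs_succ_eq (n : ℕ) :
    (⊤ : Subgroup G).lowerCentralSeries (n+1) = ⁅(⊤ : Subgroup G).lowerCentralSeries n, (⊤ : Subgroup G)⁆ := by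
  exact Subgroup.lowerCentralSeries_succ _ _

lemma map_lowerCentralSeries (f : G →* G') (hf : Function.Surjective f) (n : ℕ) :
    Subgroup.map f ((⊤ : Subgroup G).lowerCentralSeries n) = (⊤ : Subgroup G').lowerCentralSeries n := by
  induction n with
  | zero => simpa using Subgroup.map_top_of_surjective f hf
  | succ n ih =>
    rw [lcs_succ_eq, lcs_succ_eq, Subgroup.map_commutator, ih,
      Subgroup.map_top_of_surjective f hf]

lemma finite_map (f : G →* G') (S : Subgroup G) [hS : Finite S] : Finite (S.map f) := by
  have : ((S.map f : Subgroup G') : Set G') = f '' S := rfl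
  have hfin : ((S : Set G)).Finite := S.carrier.toFinite
  exact Set.Finite.to_subtype (this ▸ hfin.image f)

lemma finite_of_le {S T : Subgroup G} (h : S ≤ T) (hT : Finite T) : Finite S := by
  have hfin : ((T : Set G)).Finite := Set.finite_coe_iff.mpr hT
  exact (hfin.subset h).to_subtype

lemma finite_of_map_of_ker (f : G →* G') (S : Subgroup G) (h1 : Finite (f.ker))
    (h2 : Finite (S.map f)) : Finite S := by
  set φ : S →* G' := f.comp S.subtype with hφ
  have hker : Finite φ.ker := by
    have : Function.Injective (fun x : φ.ker => (⟨(x : S), by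
        have hx := x.2
        rw [MonoidHom.mem_ker] at hx ⊢
        exact hx⟩ : f.ker)) := by
      intro x y hxy
      ext
      exact congrArg (fun z : f.ker => (z : G)) hxy
    exact Finite.of_injective _ this
  have hrange : φ.range = S.map f := by
    rw [hφ, MonoidHom.range_comp, Subgroup.range_subtype]
  have hquot : Finite (S ⧸ φ.ker) := by
    have e := QuotientGroup.quotientKerEquivRange φ
    have : Finite φ.range := by rw [hrange]; exact h2
    exact Finite.of_equiv _ e.symm.toEquiv
  have e2 := Subgroup.groupEquivQuotientProdSubgroup (s := φ.ker)
  exact Finite.of_equiv _ e2.symm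
end infra

universe u

theorem baer (n : ℕ) : ∀ (H : Type u) [Group H],
    Finite (H ⧸ Subgroup.upperCentralSeries H n) → Finite ((⊤ : Subgroup H).lowerCentralSeries n) := by
  induction n with
  | zero =>
    intro H _ hfin
    rw [Subgroup.upperCentralSeries_zero] at hfin
    haveI : Finite H := Finite.of_equiv _ (QuotientGroup.quotientBot (G := H)).toEquiv
    rw [Subgroup.lowerCentralSeries_zero]
    exact Finite.of_equiv _ (Subgroup.topEquiv (G := H)).symm.toEquiv
  | succ n ih =>
    intro H _ hfin
    set Z : Subgroup H := Subgroup.center H with hZ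
    set π0 := QuotientGroup.mk' Z with hπ0
    -- Step A : the quotient of H⧸Z by its n-th upper central series term is finite
    have hA : Finite ((H ⧸ Z) ⧸ Subgroup.upperCentralSeries (H ⧸ Z) n) := by
      set U := Subgroup.upperCentralSeries (H ⧸ Z) n with hU
      have hcomap : Subgroup.comap π0 U = Subgroup.upperCentralSeries H (n+1) :=
        Subgroup.comap_upperCentralSeries_quotient_center n
      have hlift : ∀ x ∈ Subgroup.upperCentralSeries H (n+1),
          ((QuotientGroup.mk' U).comp π0) x = 1 := by
        intro x hx
        rw [← hcomap] at hx
        simpa [QuotientGroup.eq_one_iff] using hx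
      have hsurj : Function.Surjective
          (QuotientGroup.lift (Subgroup.upperCentralSeries H (n+1))
            ((QuotientGroup.mk' U).comp π0) hlift) := by
        intro x
        obtain ⟨h, rfl⟩ := QuotientGroup.mk'_surjective U x
        obtain ⟨g, rfl⟩ := QuotientGroup.mk'_surjective Z h
        exact ⟨QuotientGroup.mk g, rfl⟩
      exact Finite.of_surjective _ hsurj
    haveI hfinL : Finite ((⊤ : Subgroup (H ⧸ Z)).lowerCentralSeries n) := ih (H ⧸ Z) hA
    set T : Subgroup H := (⊤ : Subgroup H).lowerCentralSeries n with hT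
    have hmapT : Subgroup.map π0 T = (⊤ : Subgroup (H ⧸ Z)).lowerCentralSeries n :=
      _root_.map_lowerCentralSeries π0 (QuotientGroup.mk'_surjective Z) n
    set K : Subgroup H := T ⊔ Z with hK
    haveI hKnormal : K.Normal := Subgroup.sup_normal _ _
    have hmapK : Subgroup.map π0 K = (⊤ : Subgroup (H ⧸ Z)).lowerCentralSeries n := by
      rw [hK, Subgroup.map_sup, hmapT]
      have : Subgroup.map π0 Z = ⊥ := by
        rw [Subgroup.map_eq_bot_iff, QuotientGroup.ker_mk']
      rw [this, sup_bot_eq]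
    haveI hfinmapK : Finite (Subgroup.map π0 K) := by rw [hmapK]; exact hfinL
    -- K / (Z ∩ K) is finite
    set φK : K →* (H ⧸ Z) := π0.comp K.subtype with hφK
    have hkerφK : φK.ker = Z.subgroupOf K := by
      rw [hφK, ← MonoidHom.comap_ker, QuotientGroup.ker_mk']
      rfl
    have hrangeφK : φK.range = Subgroup.map π0 K := by
      rw [hφK, MonoidHom.range_comp, Subgroup.range_subtype]
    haveI hQfin : Finite (K ⧸ φK.ker) := by
      have e := QuotientGroup.quotientKerEquivRange φK
      have : Finite φK.range := by rw [hrangeφK]; infer_instance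
      exact Finite.of_equiv _ e.symm.toEquiv
    -- K has finite central quotient, so its commutator subgroup is finite (Schur)
    have hkerle : φK.ker ≤ Subgroup.center K := by
      rw [hkerφK]
      intro x hx
      rw [Subgroup.mem_center_iff]
      intro y
      have hxZ : (x : H) ∈ Z := hx
      have := Subgroup.mem_center_iff.mp hxZ (y : H)
      ext
      simpa using this
    haveI : Finite (K ⧸ Subgroup.center K) := by
      have hsurj : Function.Surjective
          (QuotientGroup.map φK.ker (Subgroup.center K) (MonoidHom.id K)
            (fun x hx => hkerle hx)) := by
        intro x
        obtain ⟨k, rfl⟩ := QuotientGroup.mk_surjective x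
        exact ⟨QuotientGroup.mk k, rfl⟩
      exact Finite.of_surjective _ hsurj
    haveI hKcomm : Finite (commutator K) := schur K
    set N : Subgroup H := ⁅K, K⁆ with hN
    have hNeq : N = Subgroup.map K.subtype (commutator K) := by
      rw [hN, commutator_def, Subgroup.map_commutator]
      congr 1 <;> simp [← MonoidHom.range_eq_map, Subgroup.range_subtype]
    haveI hNfin : Finite N := by rw [hNeq]; exact finite_map _ _
    haveI hNnormal : N.Normal := Subgroup.commutator_normal K K
    set π := QuotientGroup.mk' N with hπ
    have hπsurj := QuotientGroup.mk'_surjective N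
    set A : Subgroup (H ⧸ N) := Subgroup.map π K with hA2
    set B : Subgroup (H ⧸ N) := Subgroup.map π (Subgroup.upperCentralSeries H (n+1)) with hB2
    set C : Subgroup (H ⧸ N) := Subgroup.map π Z with hC2
    haveI hAnormal : A.Normal := hKnormal.map π hπsurj
    have habel : ∀ x ∈ A, ∀ y ∈ A, x * y = y * x := by
      have hbot : ⁅A, A⁆ = ⊥ := by
        rw [hA2, ← Subgroup.map_commutator, ← hN, Subgroup.map_eq_bot_iff,
          QuotientGroup.ker_mk']
      intro x hx y hy
      have : ⁅x, y⁆ ∈ ⁅A, A⁆ := Subgroup.commutator_mem_commutator hx hy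
      rw [hbot, Subgroup.mem_bot] at this
      exact commutatorElement_eq_one_iff_mul_comm.mp this
    have hCcen : C ≤ Subgroup.center (H ⧸ N) := by
      rintro _ ⟨z, hz, rfl⟩
      rw [Subgroup.mem_center_iff]
      intro y
      obtain ⟨h, rfl⟩ := hπsurj y
      rw [← map_mul, ← map_mul, Subgroup.mem_center_iff.mp hz h]
    have hCA : C ≤ A := Subgroup.map_mono le_sup_right
    have hAB : ∀ a ∈ A, ∀ b ∈ B, ⁅a, b⁆ = 1 := by
      rintro _ ⟨k, hk, rfl⟩ _ ⟨u, hu, rfl⟩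
      have hk' : k ∈ (T : Set H) * (Z : Set H) := by
        rw [← Subgroup.mul_normal T Z]; exact hk
      obtain ⟨t, ht, z, hz, rfl⟩ := hk'
      have h1 : ⁅t * z, u⁆ = ⁅t, u⁆ := comm_central_left _ _ _ hz
      have h2 : ⁅t, u⁆ ∈ ⁅T, Subgroup.upperCentralSeries H (n+1)⁆ :=
        Subgroup.commutator_mem_commutator ht hu
      rw [lower_upper_comm_bot n, Subgroup.mem_bot] at h2
      rw [← map_commutatorElement, h1, h2, map_one]
    set m : ℕ := Nat.card (K ⧸ φK.ker) with hm0
    have hm : 0 < m := Nat.card_pos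
    have hpow : ∀ a ∈ A, a ^ m ∈ C := by
      rintro _ ⟨k, hk, rfl⟩
      have hpk : (⟨k, hk⟩ : K) ^ m ∈ φK.ker := by
        have : (QuotientGroup.mk (⟨k, hk⟩ : K) : K ⧸ φK.ker) ^ m = 1 := pow_card_eq_one'
        rwa [← QuotientGroup.mk_pow, QuotientGroup.eq_one_iff] at this
      rw [hkerφK] at hpk
      have hkZ : k ^ m ∈ Z := hpk
      rw [← map_pow]
      exact ⟨k ^ m, hkZ, rfl⟩
    set sA : Set (H ⧸ N) :=
      π '' (Set.range (fun q : K ⧸ φK.ker => ((Quotient.out q : K) : H))) with hsA0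
    have hsAfin : sA.Finite := (Set.finite_range _).image _
    have hsA : ∀ a ∈ A, ∃ t ∈ sA, t ∈ A ∧ t⁻¹ * a ∈ C := by
      rintro _ ⟨k, hk, rfl⟩
      set q : K ⧸ φK.ker := QuotientGroup.mk ⟨k, hk⟩ with hq
      set t0 : K := Quotient.out q with ht0
      have hmkt0 : (QuotientGroup.mk t0 : K ⧸ φK.ker) = q := QuotientGroup.out_eq' q
      have hdiff : t0⁻¹ * ⟨k, hk⟩ ∈ φK.ker := by
        rw [← QuotientGroup.eq, hmkt0]
      rw [hkerφK] at hdiff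
      have hdiff' : (t0 : H)⁻¹ * k ∈ Z := hdiff
      refine ⟨π (t0 : H), ⟨(t0 : H), ⟨q, rfl⟩, rfl⟩, ⟨(t0 : H), t0.2, rfl⟩, ?_⟩
      rw [← map_inv, ← map_mul]
      exact ⟨(t0 : H)⁻¹ * k, hdiff', rfl⟩
    set sB : Set (H ⧸ N) :=
      π '' (Set.range (fun q : H ⧸ Subgroup.upperCentralSeries H (n+1) => (Quotient.out q : H)))
      with hsB0
    have hsBfin : sB.Finite := (Set.finite_range _).image _
    have hsB : ∀ g : H ⧸ N, ∃ t ∈ sB, t⁻¹ * g ∈ B := by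
      intro g
      obtain ⟨h, rfl⟩ := hπsurj g
      set q : H ⧸ Subgroup.upperCentralSeries H (n+1) := QuotientGroup.mk h with hq
      set t0 : H := Quotient.out q with ht0
      have hmkt0 : (QuotientGroup.mk t0 : H ⧸ Subgroup.upperCentralSeries H (n+1)) = q :=
        QuotientGroup.out_eq' q
      have hdiff : t0⁻¹ * h ∈ Subgroup.upperCentralSeries H (n+1) := by
        rw [← QuotientGroup.eq, hmkt0]
      refine ⟨π t0, ⟨t0, ⟨q, rfl⟩, rfl⟩, ?_⟩
      rw [← map_inv, ← map_mul]
      exact ⟨t0⁻¹ * h, hdiff, rfl⟩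
    haveI hfinAT : Finite (⁅A, (⊤ : Subgroup (H ⧸ N))⁆ : Subgroup (H ⧸ N)) :=
      finite_commutator_top_of_abelian_normal A B C habel hCcen hAB m hm hpow
        sA hsAfin hsA sB hsBfin hsB
    set D : Subgroup H := ⁅K, (⊤ : Subgroup H)⁆ with hD
    have hmapD : Subgroup.map π D = ⁅A, (⊤ : Subgroup (H ⧸ N))⁆ := by
      rw [hD, Subgroup.map_commutator, Subgroup.map_top_of_surjective π hπsurj]
    haveI hDfin : Finite D := by
      refine finite_of_map_of_ker π D ?_ ?_
      · rw [QuotientGroup.ker_mk']; exact hNfin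
      · rw [hmapD]; exact hfinAT
    have hle : (⊤ : Subgroup H).lowerCentralSeries (n+1) ≤ D := by
      rw [lcs_succ_eq, hD]
      exact Subgroup.commutator_mono le_sup_left le_rfl
    exact finite_of_le hle hDfin


/-- If `p : H → G` is a surjective group homomorphism whose kernel is contained in the
`n`-th term of the upper central series of `H` (for a positive integer `n`), and `G` is
finite, then `γ_{n+1}(H) = (⊤ : Subgroup H).lowerCentralSeries n` is finite. -/
theorem finite_lowerCentralSeries_of_ker_le_upperCentralSeries
    {H G : Type*} [Group H] [Group G] (p : H →* G) (hp : Function.Surjective p)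
    (n : ℕ) (hn : 0 < n) (hker : p.ker ≤ Subgroup.upperCentralSeries H n)
    (hG : Finite G) :
    Finite ((⊤ : Subgroup H).lowerCentralSeries n) := by
  apply baer n H
  haveI : Finite (H ⧸ p.ker) :=
    Finite.of_equiv G (QuotientGroup.quotientKerEquivOfSurjective p hp).symm.toEquiv
  have hsurj : Function.Surjective
      (QuotientGroup.map p.ker (Subgroup.upperCentralSeries H n) (MonoidHom.id H) hker) := by
    intro x
    obtain ⟨h, rfl⟩ := QuotientGroup.mk_surjective x
    exact ⟨QuotientGroup.mk h, rfl⟩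
  exact Finite.of_surjective _ hsurj
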